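/- arXiv:0903.3032 — 5 statements merged into one kernel-verified Lean document; each statement's English description precedes it below -/
import Mathlib

section
/- Let E be a field equipped with an action of a finite group G by field automorphisms, and suppose the order of G is invertible in E. Then the skew group ring E⟨G⟩ (the E-vector space with basis G and multiplication (αg)(βh) = α·(g β)·gh) is a semisimple ring. -/
/-- A witness that the ring `R` is the skew group ring `E⟨G⟩` of the action of a
group `G` on a commutative ring `E`: `R` is free as an `E`-module with basis the
image of `G`, `E` embeds in `R`, and the multiplication satisfies the skew
commutation rule `g · α = (g α) · g`, which encodes `(αg)(βh) = α·(g β)·(gh)`. -/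
structure SkewGroupRing (E : Type*) (G : Type*) (R : Type*) [CommRing E] [Monoid G]
    [MulSemiringAction G E] [Ring R] [Module E R] where
  emb : E →+* R
  grp : G →* R
  smul_def : ∀ (a : E) (r : R), a • r = emb a * r
  basis : Module.Basis G E R
  basis_eq : ∀ g : G, basis g = grp g
  comm : ∀ (g : G) (a : E), grp g * emb a = emb (g • a) * grp g

/-- Maschke for skew group rings: if a finite group `G` acts on a
field `E` by field automorphisms and `|G|` is invertible in `E`, then the skew group
ring `E⟨G⟩` is a semisimple ring. -/
theorem skewGroupRing_isSemisimpleRing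
    (E G R : Type*) [Field E] [Group G] [Fintype G] [MulSemiringAction G E]
    [Ring R] [Module E R] (S : SkewGroupRing E G R)
    (hcard : (Fintype.card G : E) ≠ 0) :
    IsSemisimpleRing R := by
  classical
  letI : IsScalarTower E R R :=
    ⟨fun a r s => by simp only [smul_eq_mul, S.smul_def, mul_assoc]⟩
  -- action fixes rationals/naturals
  have hfix : ∀ (h : G), h • ((Fintype.card G : E)⁻¹) = (Fintype.card G : E)⁻¹ := by
    intro h
    have : h • ((Fintype.card G : E)⁻¹)
        = (MulSemiringAction.toRingHom G E h) ((Fintype.card G : E)⁻¹) := rfl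
    rw [this, map_inv₀, map_natCast]
  refine { exists_isCompl := ?_ }
  intro p
  -- view p as an E-submodule
  let pE : Submodule E R := p.restrictScalars E
  obtain ⟨q, hq⟩ := Submodule.exists_isCompl pE
  let f : R →ₗ[E] R := pE.subtype.comp (pE.linearProjOfIsCompl q hq)
  have hf_mem : ∀ x : R, f x ∈ p := fun x => (pE.linearProjOfIsCompl q hq x).2
  have hf_id : ∀ x ∈ p, f x = x := by
    intro x hx
    have : pE.linearProjOfIsCompl q hq x = ⟨x, hx⟩ :=
      Submodule.linearProjOfIsCompl_apply_left hq ⟨x, hx⟩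
    simp [f, this]
  set c : E := (Fintype.card G : E)⁻¹ with hc
  -- the averaged map
  set T : R → R := fun x => c • ∑ g : G, S.grp g * f (S.grp g⁻¹ * x) with hT
  have hmulinv : ∀ (g : G), S.grp g * S.grp g⁻¹ = 1 := by
    intro g; rw [← map_mul, mul_inv_cancel, map_one]
  have hTadd : ∀ x y, T (x + y) = T x + T y := by
    intro x y
    simp only [hT, mul_add, map_add, ← smul_add, ← Finset.sum_add_distrib]
  have hTsmul : ∀ (a : E) (x : R), T (a • x) = a • T x := by
    intro a x
    have : ∀ g : G, S.grp g * f (S.grp g⁻¹ * (a • x)) = a • (S.grp g * f (S.grp g⁻¹ * x)) := by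
      intro g
      have h1 : S.grp g⁻¹ * (a • x) = (g⁻¹ • a) • (S.grp g⁻¹ * x) := by
        rw [S.smul_def, S.smul_def, ← mul_assoc, ← mul_assoc, S.comm]
      rw [h1, map_smul, S.smul_def, S.smul_def, ← mul_assoc, ← mul_assoc, S.comm,
        smul_inv_smul]
    simp only [hT, this, ← Finset.smul_sum]
    rw [smul_smul, smul_smul, mul_comm]
  have hTmem : ∀ x, T x ∈ p := by
    intro x
    have hsum : ∑ g : G, S.grp g * f (S.grp g⁻¹ * x) ∈ p := by
      apply Submodule.sum_mem
      intro g _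
      have := p.smul_mem (S.grp g) (hf_mem (S.grp g⁻¹ * x))
      rwa [smul_eq_mul] at this
    have := p.smul_mem (S.emb c) hsum
    rwa [smul_eq_mul, ← S.smul_def] at this
  have hTid : ∀ x ∈ p, T x = x := by
    intro x hx
    have hterm : ∀ g : G, S.grp g * f (S.grp g⁻¹ * x) = x := by
      intro g
      have hx' : S.grp g⁻¹ * x ∈ p := by
        have := p.smul_mem (S.grp g⁻¹) hx; rwa [smul_eq_mul] at this
      rw [hf_id _ hx', ← mul_assoc, hmulinv, one_mul]
    simp only [hT, hterm, Finset.sum_const, Finset.card_univ]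
    rw [← Nat.cast_smul_eq_nsmul E, smul_smul, hc, inv_mul_cancel₀ hcard, one_smul]
  have hTgrp : ∀ (h : G) (x : R), T (S.grp h * x) = S.grp h * T x := by
    intro h x
    have hre : ∑ g : G, S.grp g * f (S.grp g⁻¹ * (S.grp h * x))
        = ∑ k : G, S.grp h * (S.grp k * f (S.grp k⁻¹ * x)) := by
      rw [← Equiv.sum_comp (Equiv.mulLeft h)]
      apply Finset.sum_congr rfl
      intro k _
      have h1 : S.grp (Equiv.mulLeft h k) = S.grp h * S.grp k := by
        simp [map_mul]
      have h2 : S.grp ((Equiv.mulLeft h k))⁻¹ * (S.grp h * x) = S.grp k⁻¹ * x := by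
        simp only [Equiv.coe_mulLeft, mul_inv_rev, map_mul, mul_assoc]
        rw [← mul_assoc (S.grp h⁻¹), ← map_mul, inv_mul_cancel, map_one, one_mul]
      rw [h1, h2, mul_assoc]
    rw [hT]
    simp only [hre, ← Finset.mul_sum]
    rw [S.smul_def, S.smul_def, ← mul_assoc, ← mul_assoc, S.comm, hfix]
  -- T commutes with all left multiplications
  have hTmul : ∀ (r x : R), T (r * x) = r * T x := by
    intro r x
    have hE1 : ∀ (a : E) (r : R), T ((a • r) * x) = a • T (r * x) := by
      intro a r; rw [smul_mul_assoc, hTsmul]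
    -- induct via basis
    let L1 : R →ₗ[E] R :=
      { toFun := fun r => T (r * x),
        map_add' := fun r s => by show T ((r + s) * x) = _; rw [add_mul, hTadd],
        map_smul' := fun a r => by simp only [RingHom.id_apply]; exact hE1 a r }
    let L2 : R →ₗ[E] R :=
      { toFun := fun r => r * T x,
        map_add' := fun r s => by show (r + s) * T x = _; rw [add_mul],
        map_smul' := fun a r => by simp only [RingHom.id_apply, smul_mul_assoc] }
    have heq : L1 = L2 := S.basis.ext (fun g => by
      simp only [L1, L2, LinearMap.coe_mk, AddHom.coe_mk, S.basis_eq]; exact hTgrp g x)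
    exact LinearMap.congr_fun heq r
  let Tlin : R →ₗ[R] ↥p :=
    { toFun := fun x => ⟨T x, hTmem x⟩,
      map_add' := fun x y => Subtype.ext (hTadd x y),
      map_smul' := fun r x => Subtype.ext (by
        simp only [smul_eq_mul, RingHom.id_apply]
        exact hTmul r x) }
  have hproj : ∀ x : ↥p, Tlin x = x := fun x => Subtype.ext (hTid x x.2)
  exact ⟨LinearMap.ker Tlin, LinearMap.isCompl_of_proj hproj⟩
end

section
/- Let E be a field with a faithful action of a finite group G. Then the skew group ring E⟨G⟩ is isomorphic as a ring to the matrix ring M_n(F), where F = E^G is the fixed field and n = [E : F]. -/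
open Module


section Aux
set_option linter.unusedSectionVars false

variable {E G R : Type*} [Field E] [Group G] [Fintype G] [MulSemiringAction G E]
    [FaithfulSMul G E] [Ring R] [Module E R] (S : SkewGroupRing E G R)

local notation "F" => FixedPoints.subfield G E

noncomputable def actL (g : G) : E →ₗ[F] E :=
  (MulSemiringAction.toAlgHom F E g).toLinearMap

lemma actL_apply (g : G) (x : E) : actL (E := E) g x = g • x := rfl

noncomputable def psi (r : R) : E →ₗ[F] E :=
  ∑ g : G, S.basis.repr r g • actL g

lemma psi_apply (r : R) (x : E) : psi S r x = ∑ g : G, S.basis.repr r g * (g • x) := by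
  simp [psi, actL, smul_eq_mul]

lemma psi_smul_basis (a : E) (g : G) : psi S (a • S.basis g) = a • actL g := by
  classical
  unfold psi
  rw [map_smul, Module.Basis.repr_self]
  rw [Finset.sum_eq_single g]
  · simp
  · intro h _ hne
    simp [Finsupp.single_apply, hne.symm, Ne, eq_comm]
  · simp

lemma psi_smul (a : E) (r : R) : psi S (a • r) = a • psi S r := by
  unfold psi
  rw [map_smul, Finset.smul_sum]
  refine Finset.sum_congr rfl fun g _ => ?_
  rw [Finsupp.smul_apply, smul_eq_mul, mul_smul]

lemma basis_mul_basis (a b : E) (g h : G) :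
    (a • S.basis g) * (b • S.basis h) = (a * g • b) • S.basis (g * h) := by
  rw [S.smul_def, S.smul_def, S.smul_def, S.basis_eq, S.basis_eq, S.basis_eq]
  calc S.emb a * S.grp g * (S.emb b * S.grp h)
      = S.emb a * (S.grp g * S.emb b) * S.grp h := by
        rw [mul_assoc, mul_assoc, mul_assoc]
    _ = S.emb a * (S.emb (g • b) * S.grp g) * S.grp h := by rw [S.comm]
    _ = S.emb (a * g • b) * S.grp (g * h) := by
        rw [map_mul, map_mul, mul_assoc, mul_assoc, mul_assoc]

noncomputable def Psi : R →ₗ[F] (E →ₗ[F] E) where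
  toFun := psi S
  map_add' r s := by
    unfold psi
    rw [← Finset.sum_add_distrib]
    refine Finset.sum_congr rfl fun g _ => ?_
    rw [map_add, Finsupp.add_apply, add_smul]
  map_smul' c r := by
    show psi S (c • r) = c • psi S r
    have hc : c • r = (c : E) • r := rfl
    rw [hc, psi_smul]
    exact algebraMap_smul E c (psi S r)

lemma Psi_one : Psi S 1 = 1 := by
  have h1 : (1 : R) = (1 : E) • S.basis 1 := by
    rw [S.basis_eq, map_one, one_smul]
  show psi S 1 = 1
  rw [h1, psi_smul_basis, one_smul]
  ext x
  show (1 : G) • x = x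
  rw [one_smul]

lemma actL_mul_smul (a b : E) (g h : G) :
    (a • actL g) * (b • actL h) = (a * g • b) • actL (E := E) (g * h) := by
  ext x
  show a • (g • (b • (h • x))) = (a * g • b) • ((g * h) • x)
  rw [mul_smul g h x]
  simp only [smul_eq_mul, smul_mul']
  ring

lemma Psi_mul_aux (c d : G → E) :
    Psi S ((∑ g : G, c g • S.basis g) * (∑ h : G, d h • S.basis h)) =
    Psi S (∑ g : G, c g • S.basis g) * Psi S (∑ h : G, d h • S.basis h) := by
  classical
  have hterm : ∀ g h : G, Psi S ((c g • S.basis g) * (d h • S.basis h)) =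
      (c g • actL g) * (d h • actL (E := E) h) := by
    intro g h
    rw [basis_mul_basis]
    show psi S _ = _
    rw [psi_smul_basis, actL_mul_smul]
  have hb : ∀ (e : G → E) (g : G), Psi S (e g • S.basis g) = e g • actL (E := E) g :=
    fun e g => psi_smul_basis S (e g) g
  rw [Finset.sum_mul_sum, map_sum]
  simp only [map_sum, hterm, hb]
  rw [← Finset.sum_mul_sum]

lemma Psi_mul (r s : R) : Psi S (r * s) = Psi S r * Psi S s := by
  have h := Psi_mul_aux S (fun g => S.basis.equivFun r g) (fun h => S.basis.equivFun s h)
  rwa [S.basis.sum_equivFun r, S.basis.sum_equivFun s] at h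

noncomputable def PsiRing : R →+* (Module.End F E) where
  toFun := psi S
  map_one' := Psi_one S
  map_mul' := Psi_mul S
  map_zero' := (Psi S).map_zero
  map_add' := (Psi S).map_add

lemma Psi_injective : Function.Injective (psi S) := by
  classical
  have hker : ∀ r : R, psi S r = 0 → r = 0 := by
    intro r hr
    set f : G → (E →* E) := fun g => (MulSemiringAction.toRingHom G E g).toMonoidHom with hf
    have hfinj : Function.Injective f := by
      intro g h hgh
      exact eq_of_smul_eq_smul (α := E) fun x => DFunLike.congr_fun hgh x
    have li : LinearIndependent E (fun g : G => ⇑(f g)) :=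
      (linearIndependent_monoidHom E E).comp f hfinj
    have h0 : ∑ g : G, S.basis.repr r g • ⇑(f g) = 0 := by
      funext x
      have h1 := congrArg (fun φ : E →ₗ[F] E => φ x) hr
      simp only [LinearMap.zero_apply] at h1
      rw [psi_apply] at h1
      simpa [Finset.sum_apply, Pi.smul_apply, smul_eq_mul, f] using h1
    have hz : ∀ g : G, S.basis.repr r g = 0 :=
      Fintype.linearIndependent_iff.mp li (fun g => S.basis.repr r g) h0
    have hr0 : S.basis.repr r = 0 := Finsupp.ext fun g => hz g
    exact S.basis.repr.injective (by rw [hr0, map_zero])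
  intro r s h
  have hsub : psi S (r - s) = 0 := by
    have h2 : psi S (r - s) = psi S r - psi S s := (Psi S).map_sub r s
    rw [h2, h, sub_self]
  exact sub_eq_zero.mp (hker _ hsub)

include S in
lemma finrank_eq' : finrank F R = finrank F (E →ₗ[F] E) := by
  have h1 : finrank F E * finrank E R = finrank F R := finrank_mul_finrank F E R
  have h2 : finrank E R = Fintype.card G := Module.finrank_eq_card_basis S.basis
  have h3 : finrank F E = Fintype.card G := FixedPoints.finrank_eq_card G E
  have h4 : finrank F (E →ₗ[F] E) = finrank F E * finrank F E := Module.finrank_linearMap F F E E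
  rw [h4, ← h1, h2, h3]

end Aux

set_option maxHeartbeats 1000000 in
/-- if a finite group `G` acts faithfully on a field `E`, then the
skew group ring `E⟨G⟩` is isomorphic as a ring to the matrix ring `M_n(F)`, where
`F = E^G` is the fixed field and `n = [E : F]`. -/
theorem skewGroupRing_faithful_iso_matrixRing
    (E G R : Type*) [Field E] [Group G] [Fintype G] [MulSemiringAction G E]
    [FaithfulSMul G E] [Ring R] [Module E R] (S : SkewGroupRing E G R) :
    Nonempty (R ≃+*
      Matrix (Fin (Module.finrank (FixedPoints.subfield G E) E))
        (Fin (Module.finrank (FixedPoints.subfield G E) E))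
        (FixedPoints.subfield G E)) := by
  classical
  haveI : Module.Finite E R := Module.Finite.of_basis S.basis
  haveI : Module.Finite (FixedPoints.subfield G E) R := Module.Finite.trans E R
  have hinj : Function.Injective (Psi S) := Psi_injective S
  have key := LinearMap.injective_iff_surjective_of_finrank_eq_finrank
      (K := FixedPoints.subfield G E) (V := R) (V₂ := E →ₗ[FixedPoints.subfield G E] E)
      (finrank_eq' S) (f := Psi S)
  have hsurj : Function.Surjective (Psi S) := key.mp hinj
  let e1 : R ≃+* Module.End (FixedPoints.subfield G E) E :=
    RingEquiv.ofBijective (PsiRing S) ⟨hinj, hsurj⟩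
  let e2 := algEquivMatrix (Module.finBasis (FixedPoints.subfield G E) E)
  exact ⟨e1.trans e2.toRingEquiv⟩
end

section
/- Let E be a field with an action of a finite group G whose order is invertible in E, let N be the (normal) subgroup of elements acting trivially on E, assume N is abelian, and let F = E^G. Then the map μ : E ⊗_F Z → E[N] defined by e ⊗ z ↦ ez, where Z is the center of the skew group ring E⟨G⟩, is an isomorphism of E-algebras. -/
open scoped TensorProduct



section Aux

variable {E G R : Type*} [Field E] [Group G] [Fintype G] [MulSemiringAction G E]
  [Ring R] [Module E R] (S : SkewGroupRing E G R)

/-- membership in the center from commuting with generators -/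
lemma SGR.mem_center (x : R) (h1 : ∀ a : E, S.emb a * x = x * S.emb a)
    (h2 : ∀ g : G, S.grp g * x = x * S.grp g) : x ∈ Subring.center R := by
  rw [Subring.mem_center_iff]
  intro y
  have hy : y = ∑ g : G, S.basis.repr y g • S.basis g := (S.basis.sum_repr y).symm
  rw [hy, Finset.sum_mul, Finset.mul_sum]
  refine Finset.sum_congr rfl fun g _ => ?_
  rw [S.basis_eq, S.smul_def, mul_assoc, h2, ← mul_assoc, h1, mul_assoc]

/-- coefficients of central elements vanish outside N -/
lemma SGR.center_repr (z : R) (hz : z ∈ Subring.center R) (g : G)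
    (hg : g ∉ (MulSemiringAction.toRingAut G E).ker) : S.basis.repr z g = 0 := by
  obtain ⟨a, ha⟩ : ∃ a : E, g • a ≠ a := by
    by_contra h
    push_neg at h
    exact hg (by ext a; simpa using h a)
  have h1 : S.emb a * z = z * S.emb a := Subring.mem_center_iff.mp hz (S.emb a)
  have h2 : z * S.emb a = ∑ h : G, (S.basis.repr z h * (h • a)) • S.basis h := by
    conv_lhs => rw [← S.basis.sum_repr z]
    rw [Finset.sum_mul]
    refine Finset.sum_congr rfl fun h _ => ?_
    rw [S.basis_eq, S.smul_def, S.smul_def, mul_assoc, S.comm, ← mul_assoc, ← map_mul]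
  rw [← S.smul_def] at h1
  have h3 := congrArg (fun w => S.basis.repr w g) (h1.trans h2)
  simp only [map_smul, map_sum, Module.Basis.repr_self, Finsupp.smul_apply, Finsupp.smul_single,
    smul_eq_mul, mul_one, Finset.sum_apply', Finsupp.single_apply, Finset.sum_ite_eq,
    Finset.sum_ite_eq', Finset.mem_univ, if_true] at h3
  classical
  simp [Finsupp.single_apply] at h3
  have h4 : S.basis.repr z g * (a - g • a) = 0 := by
    rw [mul_sub, ← h3, mul_comm]
    ring
  rcases mul_eq_zero.mp h4 with h | h
  · exact h
  · exact absurd (sub_eq_zero.mp h).symm ha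

end Aux

section Aux2

variable {E G R : Type*} [Field E] [Group G] [Fintype G] [MulSemiringAction G E]
  [Ring R] [Module E R] (S : SkewGroupRing E G R)

lemma ker_smul {m : G} (hm : m ∈ (MulSemiringAction.toRingAut G E).ker) (a : E) : m • a = a := by
  have h := MonoidHom.mem_ker.mp hm
  simpa using DFunLike.congr_fun h a

lemma SGR.conj_central {n : G} (hn : n ∈ (MulSemiringAction.toRingAut G E).ker) (e : E) :
    (∑ g : G, S.emb (g • e) * S.grp (g * n * g⁻¹)) ∈ Subring.center R := by
  apply SGR.mem_center S
  · intro a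
    rw [Finset.mul_sum, Finset.sum_mul]
    refine Finset.sum_congr rfl fun g _ => ?_
    have hm : (g * n * g⁻¹) ∈ (MulSemiringAction.toRingAut G E).ker :=
      Subgroup.Normal.conj_mem (MonoidHom.normal_ker _) n hn g
    have key : S.grp (g * n * g⁻¹) * S.emb a = S.emb a * S.grp (g * n * g⁻¹) := by
      rw [S.comm, ker_smul hm]
    calc S.emb a * (S.emb (g • e) * S.grp (g * n * g⁻¹))
        = S.emb (a * (g • e)) * S.grp (g * n * g⁻¹) := by rw [← mul_assoc, ← map_mul]
      _ = S.emb (g • e) * (S.emb a * S.grp (g * n * g⁻¹)) := by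
          rw [mul_comm a, map_mul, mul_assoc (S.emb (g • e)) (S.emb a)]
      _ = S.emb (g • e) * (S.grp (g * n * g⁻¹) * S.emb a) := by rw [key]
      _ = S.emb (g • e) * S.grp (g * n * g⁻¹) * S.emb a :=
          (mul_assoc (S.emb (g • e)) (S.grp (g * n * g⁻¹)) (S.emb a)).symm
  · intro h
    rw [Finset.mul_sum, Finset.sum_mul]
    refine Fintype.sum_bijective (fun g => h * g) (Group.mulLeft_bijective h) _ _ fun g => ?_
    calc S.grp h * (S.emb (g • e) * S.grp (g * n * g⁻¹))
        = S.emb (h • g • e) * (S.grp h * S.grp (g * n * g⁻¹)) := by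
          rw [← mul_assoc (S.grp h), S.comm, mul_assoc (S.emb (h • g • e))]
      _ = S.emb ((h*g) • e) * S.grp (h * (g * n * g⁻¹)) := by rw [smul_smul, ← map_mul]
      _ = S.emb ((h*g) • e) * (S.grp ((h*g) * n * (h*g)⁻¹) * S.grp h) := by
          rw [← map_mul]; congr 2; group
      _ = S.emb ((h*g) • e) * S.grp ((h*g) * n * (h*g)⁻¹) * S.grp h :=
          (mul_assoc _ (S.grp ((h*g) * n * (h*g)⁻¹)) (S.grp h)).symm

end Aux2

section Aux3

variable {E G R : Type*} [Field E] [Group G] [Fintype G] [MulSemiringAction G E]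
  [Ring R] [Module E R] (S : SkewGroupRing E G R)

lemma SGR.grp_mem_span_center (hcard : (Fintype.card G : E) ≠ 0)
    {n : G} (hn : n ∈ (MulSemiringAction.toRingAut G E).ker)
    (hNab : ∀ a b : G, a ∈ (MulSemiringAction.toRingAut G E).ker →
      b ∈ (MulSemiringAction.toRingAut G E).ker → a * b = b * a) :
    S.grp n ∈ Submodule.span E ((Subring.center R : Subring R) : Set R) := by
  classical
  set W := Submodule.span E ((Subring.center R : Subring R) : Set R) with hWdef
  by_contra hW
  obtain ⟨f, hf1, hf2⟩ := Submodule.exists_dual_map_eq_bot_of_notMem hW inferInstance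
  have hf0 : ∀ w ∈ W, f w = 0 := fun w hw => by
    have : f w ∈ W.map f := Submodule.mem_map_of_mem hw
    rwa [hf2, Submodule.mem_bot] at this
  set lam : G → E := fun g => f (S.grp (g * n * g⁻¹)) with hlam
  have key : ∀ e : E, ∑ g : G, lam g * (g • e) = 0 := by
    intro e
    have hc := SGR.conj_central S hn e
    have h0 : f (∑ g : G, S.emb (g • e) * S.grp (g * n * g⁻¹)) = 0 :=
      hf0 _ (Submodule.subset_span hc)
    rw [map_sum] at h0
    rw [← h0]
    refine Finset.sum_congr rfl fun g _ => ?_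
    rw [← S.smul_def, map_smul, smul_eq_mul, mul_comm]
  set phi : G → (E →* E) := fun g => (MulSemiringAction.toRingHom G E g).toMonoidHom with hphi
  have hphiapp : ∀ (g : G) (e : E), phi g e = g • e := fun g e => rfl
  set Psi : (E →* E) → E := fun ps => ∑ g ∈ Finset.univ.filter (fun g => phi g = ps), lam g
    with hPsi
  have hfun : ∑ ps ∈ Finset.univ.image phi, Psi ps • (ps : E → E) = 0 := by
    funext e
    rw [Finset.sum_apply, Pi.zero_apply]
    have := Finset.sum_fiberwise_of_maps_to
      (fun (g : G) (_ : g ∈ Finset.univ) => Finset.mem_image_of_mem phi (Finset.mem_univ g))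
      (fun g => lam g * (g • e))
    rw [← key e, ← this]
    refine Finset.sum_congr rfl fun ps _ => ?_
    rw [Pi.smul_apply, smul_eq_mul, hPsi, Finset.sum_mul]
    refine Finset.sum_congr rfl fun g hg => ?_
    rw [← hphiapp, (Finset.mem_filter.mp hg).2]
  have hPsi0 : Psi (phi n) = 0 :=
    linearIndependent_iff'.mp (linearIndependent_monoidHom E E) _ _ hfun (phi n)
      (Finset.mem_image_of_mem phi (Finset.mem_univ n))
  -- compute Psi (phi n)
  have hker : ∀ g : G, phi g = phi n ↔ g ∈ (MulSemiringAction.toRingAut G E).ker := by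
    intro g
    constructor
    · intro h
      rw [MonoidHom.mem_ker]
      ext a
      have := DFunLike.congr_fun h a
      rw [hphiapp, hphiapp, ker_smul hn] at this
      simpa using this
    · intro h
      ext a
      rw [hphiapp, hphiapp, ker_smul hn, ker_smul h]
  have hconj : ∀ g ∈ Finset.univ.filter (fun g => phi g = phi n), lam g = f (S.grp n) := by
    intro g hg
    have hgk := (hker g).mp (Finset.mem_filter.mp hg).2
    have : g * n * g⁻¹ = n := by
      rw [hNab g n hgk hn]; group
    rw [hlam]; simp only [this]
  rw [hPsi] at hPsi0
  simp only [] at hPsi0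
  rw [Finset.sum_congr rfl hconj, Finset.sum_const, nsmul_eq_mul] at hPsi0
  have hcardN : ((Finset.univ.filter (fun g => phi g = phi n)).card : E) ≠ 0 := by
    have hdvd : (Finset.univ.filter (fun g => phi g = phi n)).card ∣ Fintype.card G := by
      have : (Finset.univ.filter (fun g => phi g = phi n)).card
          = Nat.card (MulSemiringAction.toRingAut G E).ker := by
        rw [Nat.card_eq_fintype_card, ← Fintype.card_subtype]
        exact Fintype.card_congr (Equiv.subtypeEquivRight hker)
      rw [this, ← Nat.card_eq_fintype_card]
      exact Subgroup.card_subgroup_dvd_card _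
    obtain ⟨k, hk⟩ := hdvd
    intro h0
    apply hcard
    rw [hk]; push_cast; rw [h0, zero_mul]
  exact hf1 ((mul_eq_zero.mp hPsi0).resolve_left hcardN)

end Aux3

set_option synthInstance.maxHeartbeats 1000000
set_option maxHeartbeats 2000000

/-- let `E` be a field with an action of a finite group `G` whose order
is invertible in `E`, let `N` be the normal subgroup of elements acting trivially on `E`,
assume `N` is abelian, and let `F = E^G`.  Then the map `μ : E ⊗_F Z → E[N]`,
`e ⊗ z ↦ ez`, where `Z` is the center of the skew group ring `E⟨G⟩`, is an isomorphism
of `E`-algebras.  (Here `E[N]` is realized inside `E⟨G⟩` as the `E`-linear span of `N`;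
the map `μ` is multiplicative, injective, and has image exactly `E[N]`.) -/
theorem skewGroupRing_center_tensor_iso_groupAlgebra
    (E G R : Type*) [Field E] [Group G] [Fintype G] [MulSemiringAction G E]
    [Ring R] [Module E R] (S : SkewGroupRing E G R)
    (hcard : (Fintype.card G : E) ≠ 0)
    (N : Subgroup G) (hNdef : N = (MulSemiringAction.toRingAut G E).ker)
    (hNab : ∀ a b : G, a ∈ N → b ∈ N → a * b = b * a)
    [Algebra (FixedPoints.subfield G E) ↥(Subring.center R)]
    (halg : ∀ f : FixedPoints.subfield G E,
      ((algebraMap (FixedPoints.subfield G E) ↥(Subring.center R)) f : R) = S.emb (f : E))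
    (μ : E ⊗[FixedPoints.subfield G E] ↥(Subring.center R) →ₗ[FixedPoints.subfield G E] R)
    (hμ : ∀ (e : E) (z : ↥(Subring.center R)), μ (e ⊗ₜ z) = S.emb e * (z : R)) :
    Function.Injective μ ∧ (∀ a b, μ (a * b) = μ a * μ b) ∧
      (LinearMap.range μ : Set R) = ↑(Submodule.span E (⇑S.grp '' (N : Set G))) := by
  classical
  refine ⟨?_, ?_, ?_⟩
  · -- Injectivity
    set b := Module.Basis.ofVectorSpace (FixedPoints.subfield G E) ↥(Subring.center R) with hb
    set ν : ((Module.Basis.ofVectorSpaceIndex (FixedPoints.subfield G E) ↥(Subring.center R)) →₀ E) →ₗ[E] R :=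
      Finsupp.linearCombination E (fun i => ((b i : ↥(Subring.center R)) : R)) with hνdef
    have hν : ∀ d : (Module.Basis.ofVectorSpaceIndex (FixedPoints.subfield G E) ↥(Subring.center R)) →₀ E,
        ν d = d.sum fun i e => S.emb e * ((b i : ↥(Subring.center R)) : R) := by
      intro d
      rw [hνdef, Finsupp.linearCombination_apply]
      exact Finsupp.sum_congr fun i _ => S.smul_def _ _
    have hgrpinv : ∀ g : G, S.grp g * S.grp g⁻¹ = 1 := by
      intro g; rw [← map_mul, mul_inv_cancel, map_one]
    have hνconj : ∀ (g : G) (d : (Module.Basis.ofVectorSpaceIndex (FixedPoints.subfield G E) ↥(Subring.center R)) →₀ E),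
        ν (d.mapRange (fun e => g • e) (smul_zero g)) = S.grp g * ν d * S.grp g⁻¹ := by
      intro g d
      rw [hν, hν, Finsupp.sum_mapRange_index (fun i => by rw [map_zero, zero_mul]),
        Finsupp.sum, Finsupp.sum, Finset.mul_sum, Finset.sum_mul]
      refine Finset.sum_congr rfl fun i _ => Eq.symm ?_
      have hzc : ∀ y : R, y * ((b i : ↥(Subring.center R)) : R) = ((b i : ↥(Subring.center R)) : R) * y :=
        Subring.mem_center_iff.mp (b i : ↥(Subring.center R)).2
      calc S.grp g * (S.emb (d i) * ((b i : ↥(Subring.center R)) : R)) * S.grp g⁻¹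
          = S.emb (g • d i) * (S.grp g * ((b i : ↥(Subring.center R)) : R) * S.grp g⁻¹) := by
            rw [← mul_assoc (S.grp g), S.comm, mul_assoc (S.emb (g • d i)),
              mul_assoc (S.emb (g • d i))]
        _ = S.emb (g • d i) * ((b i : ↥(Subring.center R)) : R) := by
            rw [hzc (S.grp g), mul_assoc, hgrpinv, mul_one]
    have hμν : ∀ d : (Module.Basis.ofVectorSpaceIndex (FixedPoints.subfield G E) ↥(Subring.center R)) →₀ E,
        μ (d.sum fun i e => e ⊗ₜ[FixedPoints.subfield G E] (b i : ↥(Subring.center R))) = ν d := by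
      intro d
      refine Eq.trans (map_finsuppSum μ d _) ?_
      rw [hν]
      exact Finsupp.sum_congr fun i _ => hμ _ _
    have hrep : ∀ t, μ t = 0 →
        ∃ d : (Module.Basis.ofVectorSpaceIndex (FixedPoints.subfield G E) ↥(Subring.center R)) →₀ E,
          t = d.sum fun i e => e ⊗ₜ[FixedPoints.subfield G E] (b i : ↥(Subring.center R)) := by
      intro t ht
      clear ht
      induction t using TensorProduct.induction_on with
      | zero => exact ⟨0, by rw [Finsupp.sum_zero_index]⟩
      | tmul e z =>
        refine ⟨(b.repr z).mapRange (fun f : ↥(FixedPoints.subfield G E) => (f : E) * e) (by simp), ?_⟩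
        rw [Finsupp.sum_mapRange_index
          (fun i => by norm_num)]
        conv_lhs => rw [← b.linearCombination_repr z]
        rw [Finsupp.linearCombination_apply, Finsupp.sum, Finsupp.sum,
          TensorProduct.tmul_sum]
        refine Finset.sum_congr rfl fun i _ => ?_
        rw [TensorProduct.tmul_smul, TensorProduct.smul_tmul']
        rfl
      | add u v hu hv =>
        obtain ⟨du, hdu⟩ := hu; obtain ⟨dv, hdv⟩ := hv
        refine ⟨du + dv, ?_⟩
        rw [Finsupp.sum_add_index' (fun i => by rw [TensorProduct.zero_tmul])
          (fun i x y => by rw [TensorProduct.add_tmul]), hdu, hdv]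
    have hν0 : ∀ d : (Module.Basis.ofVectorSpaceIndex (FixedPoints.subfield G E) ↥(Subring.center R)) →₀ E, ν d = 0 → d = 0 := by
      suffices H : ∀ (k : ℕ) (d : (Module.Basis.ofVectorSpaceIndex (FixedPoints.subfield G E) ↥(Subring.center R)) →₀ E),
          d.support.card = k → ν d = 0 → d = 0 by
        exact fun d => H d.support.card d rfl
      intro k
      induction k using Nat.strong_induction_on with
      | _ k IH =>
        intro d hcardk hd0
        by_contra hdne
        obtain ⟨i₀, hi₀⟩ := Finsupp.support_nonempty_iff.mpr hdne
        have hdi₀ : d i₀ ≠ 0 := Finsupp.mem_support_iff.mp hi₀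
        set d' := (d i₀)⁻¹ • d with hd'def
        have hd'app : ∀ i, d' i = (d i₀)⁻¹ * d i := fun i => rfl
        have hd'supp : d'.support = d.support :=
          Finsupp.support_smul_eq (inv_ne_zero hdi₀)
        have hd'i₀ : d' i₀ = 1 := by rw [hd'app, inv_mul_cancel₀ hdi₀]
        have hνd' : ν d' = 0 := by rw [hd'def, map_smul, hd0, smul_zero]
        have hfix : ∀ (g : G) (i), g • d' i = d' i := by
          intro g
          set eg := d'.mapRange (fun e => g • e) (smul_zero g) - d' with hegdef
          have hegν : ν eg = 0 := by
            rw [hegdef, map_sub, hνconj, hνd', mul_zero, zero_mul, sub_zero]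
          have hegapp : ∀ i, eg i = g • d' i - d' i := fun i => by
            rw [hegdef, Finsupp.sub_apply, Finsupp.mapRange_apply]
          have hegsupp : eg.support ⊆ d.support.erase i₀ := by
            intro i hi
            have hne : eg i ≠ 0 := Finsupp.mem_support_iff.mp hi
            have hiis : i ∈ d.support := by
              by_contra hid
              have h0 : d' i = 0 := Finsupp.notMem_support_iff.mp (by rw [hd'supp]; exact hid)
              rw [hegapp, h0, smul_zero, sub_zero] at hne
              exact hne rfl
            rw [Finset.mem_erase]
            refine ⟨?_, hiis⟩
            rintro rfl
            rw [hegapp, hd'i₀, smul_one, sub_self] at hne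
            exact hne rfl
          have hcard' : eg.support.card < k := by
            rw [← hcardk]
            exact lt_of_le_of_lt (Finset.card_le_card hegsupp)
              (Finset.card_erase_lt_of_mem hi₀)
          have heg0 := IH _ hcard' eg rfl hegν
          intro i
          have h1 : eg i = 0 := by rw [heg0]; rfl
          rw [hegapp] at h1
          exact sub_eq_zero.mp h1
        have hmemF : ∀ i, d' i ∈ FixedPoints.subfield G E := fun i g => hfix g i
        have hcoe : ((∑ i ∈ d'.support, (⟨d' i, hmemF i⟩ : FixedPoints.subfield G E) • b i : ↥(Subring.center R)) : R) = ν d' := by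
          rw [hν, Finsupp.sum]
          push_cast
          refine Finset.sum_congr rfl fun i _ => ?_
          rw [Algebra.smul_def, MulMemClass.coe_mul, halg]
        have hsum0 : ∑ i ∈ d'.support, (⟨d' i, hmemF i⟩ : FixedPoints.subfield G E) • b i = (0 : ↥(Subring.center R)) := by
          apply Subtype.ext
          show ((∑ i ∈ d'.support, (⟨d' i, hmemF i⟩ : FixedPoints.subfield G E) • b i : ↥(Subring.center R)) : R) = ((0 : ↥(Subring.center R)) : R)
          rw [hcoe, hνd']
          rfl
        have hlin := linearIndependent_iff'.mp b.linearIndependent d'.support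
          (fun i => (⟨d' i, hmemF i⟩ : FixedPoints.subfield G E)) hsum0 i₀ (by rw [hd'supp]; exact hi₀)
        have hcontra : d' i₀ = 0 := congrArg Subtype.val hlin
        rw [hd'i₀] at hcontra
        exact one_ne_zero hcontra
    intro t1 t2 h12
    suffices key0 : ∀ t, μ t = 0 → t = 0 by
      have := key0 (t1 - t2) (by rw [map_sub, h12, sub_self])
      exact sub_eq_zero.mp this
    intro t ht
    obtain ⟨d, rfl⟩ := hrep t ht
    rw [hμν] at ht
    rw [hν0 d ht, Finsupp.sum_zero_index]
  · -- Multiplicativity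
    intro a b
    induction a using TensorProduct.induction_on with
    | zero => rw [zero_mul, map_zero, zero_mul]
    | tmul e z =>
      induction b using TensorProduct.induction_on with
      | zero => rw [mul_zero, map_zero, mul_zero]
      | tmul e' z' =>
        rw [Algebra.TensorProduct.tmul_mul_tmul, hμ, hμ, hμ]
        have hc : S.emb e' * (z : R) = (z : R) * S.emb e' :=
          Subring.mem_center_iff.mp z.2 (S.emb e')
        push_cast
        rw [map_mul, mul_assoc (S.emb e) (S.emb e'), mul_assoc (S.emb e) (z : R)]
        congr 1
        rw [← mul_assoc, hc, mul_assoc]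
      | add b1 b2 h1 h2 => rw [mul_add, map_add, map_add, mul_add, h1, h2]
    | add a1 a2 h1 h2 => rw [add_mul, map_add, map_add, add_mul, h1, h2]
  · -- Range
    have hspan : Submodule.span E ((Subring.center R : Subring R) : Set R)
        = Submodule.span E (⇑S.grp '' (N : Set G)) := by
      apply le_antisymm
      · rw [Submodule.span_le]
        intro z hz
        have hzsum : z = ∑ g ∈ Finset.univ.filter (· ∈ N), S.basis.repr z g • S.basis g := by
          conv_lhs => rw [← S.basis.sum_repr z]
          refine (Finset.sum_subset (Finset.filter_subset _ _) fun g _ hg => ?_).symm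
          rw [SGR.center_repr S z hz g, zero_smul]
          rw [Finset.mem_filter] at hg
          push_neg at hg
          rw [← hNdef]
          exact hg (Finset.mem_univ g)
        rw [hzsum]
        apply Submodule.sum_mem
        intro g hg
        apply Submodule.smul_mem
        apply Submodule.subset_span
        rw [S.basis_eq]
        exact Set.mem_image_of_mem _ (Finset.mem_filter.mp hg).2
      · rw [Submodule.span_le]
        rintro _ ⟨n, hnN, rfl⟩
        exact SGR.grp_mem_span_center S hcard (hNdef ▸ hnN)
          (fun a b ha hb => hNab a b (hNdef ▸ ha) (hNdef ▸ hb))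
    rw [← hspan]
    ext x
    constructor
    · rintro ⟨t, rfl⟩
      induction t using TensorProduct.induction_on with
      | zero => rw [map_zero]; exact Submodule.zero_mem _
      | tmul e z =>
        rw [hμ, ← S.smul_def]
        exact Submodule.smul_mem _ _ (Submodule.subset_span z.2)
      | add u v hu hv => rw [map_add]; exact Submodule.add_mem _ hu hv
    · intro hx
      have hclaim : ∀ (t : E ⊗[FixedPoints.subfield G E] ↥(Subring.center R)) (e : E),
          ∃ t', μ t' = e • μ t := by
        intro t e
        induction t using TensorProduct.induction_on with
        | zero => exact ⟨0, by rw [map_zero, smul_zero]⟩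
        | tmul e' z => exact ⟨(e * e') ⊗ₜ z, by
            rw [hμ, hμ, map_mul, S.smul_def, mul_assoc]⟩
        | add u v hu hv =>
          obtain ⟨tu, htu⟩ := hu; obtain ⟨tv, htv⟩ := hv
          exact ⟨tu + tv, by rw [map_add, map_add, smul_add, htu, htv]⟩
      refine Submodule.span_induction ?_ ?_ ?_ ?_ hx
      · intro z hz
        exact ⟨(1 : E) ⊗ₜ ⟨z, hz⟩, by rw [hμ, map_one, one_mul]⟩
      · exact ⟨0, map_zero μ⟩
      · rintro x y - - ⟨tx, rfl⟩ ⟨ty, rfl⟩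
        exact ⟨tx + ty, map_add μ tx ty⟩
      · rintro e x - ⟨t, rfl⟩
        exact hclaim t e
end

section
/- Let E be a field with an action of a finite group G of order invertible in E, with abelian kernel N, fixed field F = E^G, and fix a separable closure F̄ of F. For any finitely generated E⟨G⟩-module W, write F̄ ⊗_E W ≅ ⊕_{χ ∈ N^∨} U_χ^{m_χ} as a sum of one-dimensional N-representations, where N^∨ = Hom(N, F̄^×). Then the element ρ(W) = Σ m_χ χ ∈ ℤ[N^∨] is invariant under the action of the absolute Galois group G_F on ℤ[N^∨] given by (g * χ)(n) = g(χ(ḡ^{-1} n ḡ)). -/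
open scoped TensorProduct

section Aux

variable {E G R : Type*} [Field E] [Group G] [MulSemiringAction G E]
  [Ring R] [Module E R] (S : SkewGroupRing E G R)
  (Ω : Type*) [Field Ω] [Algebra E Ω]
  (W : Type*) [AddCommGroup W] [Module R W] [Module E W]
  (hEW : ∀ (e : E) (w : W), e • w = S.emb e • w)
  (σ : Ω →+* Ω) (h : G)
  (hσ : ∀ e : E, σ (algebraMap E Ω e) = algebraMap E Ω (h • e))

include hEW in
theorem skew_key (e : E) (w : W) :
    S.grp h • (e • w) = (h • e) • (S.grp h • w) := by
  rw [hEW e w, ← mul_smul, S.comm, mul_smul, ← hEW]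

noncomputable def twistAddHom : Ω ⊗[E] W →+ Ω ⊗[E] W :=
  TensorProduct.liftAddHom
    { toFun := fun c =>
        { toFun := fun w => σ c ⊗ₜ[E] (S.grp h • w)
          map_zero' := by simp
          map_add' := fun w w' => by simp [smul_add, TensorProduct.tmul_add] }
      map_zero' := by ext w; simp
      map_add' := fun c c' => by ext w; simp [TensorProduct.add_tmul] }
    (fun e c w => by
      simp only [AddMonoidHom.coe_mk, ZeroHom.coe_mk]
      rw [skew_key S W hEW h, Algebra.smul_def, map_mul, hσ, ← Algebra.smul_def,
        TensorProduct.smul_tmul])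

@[simp] theorem twistAddHom_tmul (c : Ω) (w : W) :
    twistAddHom S Ω W hEW σ h hσ (c ⊗ₜ w) = σ c ⊗ₜ (S.grp h • w) :=
  TensorProduct.liftAddHom_tmul _ _ _ _

theorem twistAddHom_smul (c : Ω) (x : Ω ⊗[E] W) :
    twistAddHom S Ω W hEW σ h hσ (c • x) = σ c • twistAddHom S Ω W hEW σ h hσ x := by
  induction x using TensorProduct.induction_on with
  | zero => simp
  | tmul c' w => rw [TensorProduct.smul_tmul', twistAddHom_tmul, twistAddHom_tmul,
      TensorProduct.smul_tmul', smul_eq_mul, smul_eq_mul, map_mul]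
  | add x y hx hy => rw [smul_add, map_add, hx, hy, map_add, smul_add]

theorem twistAddHom_comp (σ' : Ω →+* Ω) (h' : G)
    (hσ' : ∀ e : E, σ' (algebraMap E Ω e) = algebraMap E Ω (h' • e))
    (hσσ' : ∀ c : Ω, σ' (σ c) = c) (hhh' : h' * h = 1) (x : Ω ⊗[E] W) :
    twistAddHom S Ω W hEW σ' h' hσ' (twistAddHom S Ω W hEW σ h hσ x) = x := by
  induction x using TensorProduct.induction_on with
  | zero => simp
  | tmul c w =>
      rw [twistAddHom_tmul, twistAddHom_tmul, hσσ', ← mul_smul, ← map_mul, hhh']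
      simp
  | add x y hx hy => rw [map_add, map_add, hx, hy]

end Aux

/-- let `E` be a field with an action of a finite group `G` of order
invertible in `E`, with abelian kernel `N`, fixed field `F = E^G`, and a fixed
separable (algebraic) closure `Ω = F̄` of `F`.  For a finitely generated `E⟨G⟩`-module
`W`, write `Ω ⊗_E W ≅ ⊕_{χ ∈ N^∨} U_χ^{m_χ}`, i.e. let `m χ` be the dimension of the
`χ`-eigenspace of the `N`-action on `Ω ⊗_E W`.  Then `ρ(W) = Σ m_χ · χ ∈ ℤ[N^∨]` is
invariant under the action of the absolute Galois group `G_F` on `ℤ[N^∨]` given by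
`(g * χ)(n) = g(χ(ḡ⁻¹ n ḡ))`: for every `g ∈ G_F` the multiplicity of `g * χ` equals
that of `χ`. -/
theorem multiplicity_function_galois_invariant
    (E G R : Type*) [Field E] [Group G] [Fintype G] [MulSemiringAction G E]
    [Ring R] [Module E R] (S : SkewGroupRing E G R)
    (hcard : (Fintype.card G : E) ≠ 0)
    (N : Subgroup G) (hNorm : N.Normal)
    (hNdef : N = (MulSemiringAction.toRingAut G E).ker)
    (hNab : ∀ a b : G, a ∈ N → b ∈ N → a * b = b * a)
    (F : Type*) [Field F] [Algebra F E]
    (hF : ∀ e : E, (∀ g : G, g • e = e) ↔ e ∈ (algebraMap F E).range)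
    (Ω : Type*) [Field Ω] [IsAlgClosed Ω] [Algebra F Ω] [Algebra E Ω]
    [IsScalarTower F E Ω] [Algebra.IsAlgebraic F Ω]
    (W : Type*) [AddCommGroup W] [Module R W] [Module E W] [FiniteDimensional E W]
    (hEW : ∀ (e : E) (w : W), e • w = S.emb e • w)
    (T : ↥N → Module.End Ω (Ω ⊗[E] W))
    (hT : ∀ (n : ↥N) (c : Ω) (w : W), T n (c ⊗ₜ w) = c ⊗ₜ (S.grp ↑n • w))
    (bar : (Ω ≃ₐ[F] Ω) → G)
    (hbar : ∀ (g : Ω ≃ₐ[F] Ω) (e : E),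
      g (algebraMap E Ω e) = algebraMap E Ω ((bar g) • e)) :
    ∀ (g : Ω ≃ₐ[F] Ω) (χ χ' : ↥N →* Ωˣ),
      (∀ n : ↥N, ((χ' n : Ωˣ) : Ω) =
        g ((χ ⟨(bar g)⁻¹ * ↑n * bar g, hNorm.conj_mem' ↑n n.2 (bar g)⟩ : Ωˣ) : Ω)) →
      Module.finrank Ω ↥(⨅ n : ↥N, Module.End.eigenspace (T n) ((χ' n : Ωˣ) : Ω)) =
        Module.finrank Ω ↥(⨅ n : ↥N, Module.End.eigenspace (T n) ((χ n : Ωˣ) : Ω)) := by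
  intro g χ χ' hχ'
  set h : G := bar g with hh
  -- the two semilinear twist maps
  have hσ : ∀ e : E, (g : Ω →+* Ω) (algebraMap E Ω e) = algebraMap E Ω (h • e) := hbar g
  have hσ' : ∀ e : E, ((g.symm : Ω ≃ₐ[F] Ω) : Ω →+* Ω) (algebraMap E Ω e)
      = algebraMap E Ω (h⁻¹ • e) := by
    intro e
    apply g.injective
    simp only [RingHom.coe_coe]
    rw [AlgEquiv.apply_symm_apply, hbar, smul_smul, mul_inv_cancel, one_smul]
  set Φ := twistAddHom S Ω W hEW (g : Ω →+* Ω) h hσ with hΦ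
  set Φ' := twistAddHom S Ω W hEW ((g.symm : Ω ≃ₐ[F] Ω) : Ω →+* Ω) h⁻¹ hσ' with hΦ'
  have hΦΦ' : ∀ x, Φ' (Φ x) = x := by
    intro x
    exact twistAddHom_comp S Ω W hEW _ h hσ _ h⁻¹ hσ'
      (fun c => g.symm_apply_apply c) (inv_mul_cancel h) x
  have hΦ'Φ : ∀ x, Φ (Φ' x) = x := by
    intro x
    exact twistAddHom_comp S Ω W hEW _ h⁻¹ hσ' _ h hσ
      (fun c => g.apply_symm_apply c) (mul_inv_cancel h) x
  -- intertwining relations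
  have hTΦ : ∀ (n : ↥N) (x : Ω ⊗[E] W),
      T n (Φ x) = Φ (T ⟨h⁻¹ * ↑n * h, hNorm.conj_mem' ↑n n.2 h⟩ x) := by
    intro n x
    induction x using TensorProduct.induction_on with
    | zero => simp
    | tmul c w =>
        rw [hΦ, twistAddHom_tmul, hT, hT, twistAddHom_tmul, ← mul_smul, ← mul_smul,
          ← map_mul, ← map_mul]
        congr 2
        group
    | add x y hx hy => simp only [map_add, hx, hy]
  have hTΦ' : ∀ (n : ↥N) (x : Ω ⊗[E] W),
      T n (Φ' x) = Φ' (T ⟨h * ↑n * h⁻¹, by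
        simpa using hNorm.conj_mem' ↑n n.2 h⁻¹⟩ x) := by
    intro n x
    induction x using TensorProduct.induction_on with
    | zero => simp
    | tmul c w =>
        rw [hΦ', twistAddHom_tmul, hT, hT, twistAddHom_tmul, ← mul_smul, ← mul_smul,
          ← map_mul, ← map_mul]
        congr 2
        group
    | add x y hx hy => simp only [map_add, hx, hy]
  set S₁ := ⨅ n : ↥N, Module.End.eigenspace (T n) ((χ n : Ωˣ) : Ω) with hS₁
  set S₂ := ⨅ n : ↥N, Module.End.eigenspace (T n) ((χ' n : Ωˣ) : Ω) with hS₂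
  -- χ' of a conjugate
  have hχ'' : ∀ m : ↥N, ((χ' ⟨h * ↑m * h⁻¹, by simpa using hNorm.conj_mem' ↑m m.2 h⁻¹⟩ : Ωˣ) : Ω)
      = g ((χ m : Ωˣ) : Ω) := by
    intro m
    rw [hχ']
    congr 2
    ext
    simp only
    group
  have hmem₁ : ∀ x ∈ S₁, Φ x ∈ S₂ := by
    intro x hx
    rw [hS₂, Submodule.mem_iInf]
    intro n
    rw [Module.End.mem_eigenspace_iff, hTΦ n x]
    have hxm := (Submodule.mem_iInf _).1 hx ⟨h⁻¹ * ↑n * h, hNorm.conj_mem' ↑n n.2 h⟩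
    rw [Module.End.mem_eigenspace_iff] at hxm
    rw [hxm, hΦ, twistAddHom_smul, hχ' n]
    rfl
  have hmem₂ : ∀ x ∈ S₂, Φ' x ∈ S₁ := by
    intro x hx
    rw [hS₁, Submodule.mem_iInf]
    intro m
    rw [Module.End.mem_eigenspace_iff, hTΦ' m x]
    have hxm := (Submodule.mem_iInf _).1 hx
      ⟨h * ↑m * h⁻¹, by simpa using hNorm.conj_mem' ↑m m.2 h⁻¹⟩
    rw [Module.End.mem_eigenspace_iff] at hxm
    rw [hxm, hΦ', twistAddHom_smul, hχ'' m]
    simp only [RingHom.coe_coe]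
    rw [g.symm_apply_apply]
  -- build the additive equivalence S₂ ≃+ S₁
  let e : S₂ ≃+ S₁ :=
    { toFun := fun x => ⟨Φ' x, hmem₂ x x.2⟩
      invFun := fun x => ⟨Φ x, hmem₁ x x.2⟩
      left_inv := fun x => by ext; exact hΦ'Φ x
      right_inv := fun x => by ext; exact hΦΦ' x
      map_add' := fun x y => by ext; exact Φ'.map_add x y }
  have hrank : Module.rank Ω S₂ = Module.rank Ω S₁ := by
    refine rank_eq_of_equiv_equiv (R := Ω) (R' := Ω)
      ((g.symm : Ω ≃ₐ[F] Ω) : Ω →+* Ω).toZeroHom e g.symm.bijective ?_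
    intro c x
    ext
    show Φ' (c • (x : Ω ⊗[E] W)) = g.symm c • Φ' (x : Ω ⊗[E] W)
    exact twistAddHom_smul S Ω W hEW _ h⁻¹ hσ' c x
  rw [Module.finrank, Module.finrank, hrank]
end

section
/- Let G be a profinite group acting continuously on a field E. Then the category of continuous finite-dimensional E-semilinear representations of G is equivalent to the filtered colimit, over open normal subgroups G' of G, of the categories of E^{G'}-semilinear representations of G/G'; the structure functors are given by extension of scalars W ↦ E ⊗_{E^{G'}} W. -/
/-- The multiplicative group structure (composition) on additive automorphisms, as
`AddAut.group` provided in the older Mathlib. -/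
instance addEquivSelfGroupOld (A : Type*) [Add A] : Group (A ≃+ A) where
  mul g h := AddEquiv.trans h g
  one := AddEquiv.refl _
  inv := AddEquiv.symm
  mul_assoc _ _ _ := rfl
  one_mul _ := rfl
  mul_one _ := rfl
  inv_mul_cancel := AddEquiv.self_trans_symm

set_option synthInstance.maxHeartbeats 1000000 in
set_option maxHeartbeats 1000000 in
/-- let `G` be a profinite group acting continuously on a field `E`.
Then the category of continuous finite-dimensional `E`-semilinear representations of
`G` is the filtered colimit, over open normal subgroups `G'` of `G`, of the categories
of `E^{G'}`-semilinear representations of `G/G'`, with structure functors the extension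
of scalars `W ↦ E ⊗_{E^{G'}} W`.  Concretely: every continuous finite-dimensional
semilinear representation `(V, ρ)` of `G` is extended from a finite level, i.e. there
are an open normal subgroup `G' ≤ G`, the fixed subfield `F' = E^{G'}`, and a
`G`-stable `F'`-subspace `W` of `V` on which `G'` acts trivially (so `G/G'` acts
`F'`-semilinearly on `W`) such that the natural map `E ⊗_{F'} W → V` is an isomorphism
(`W` spans `V` over `E` and `dim_{F'} W = dim_E V`). -/
theorem semilinear_rep_extended_from_finite_level
    (E G : Type*) [Field E] [Group G] [TopologicalSpace G] [IsTopologicalGroup G]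
    [CompactSpace G] [TotallyDisconnectedSpace G] [T2Space G]
    [MulSemiringAction G E] (hcontE : ∀ e : E, IsOpen {g : G | g • e = e})
    (V : Type*) [AddCommGroup V] [Module E V] [FiniteDimensional E V]
    (ρ : G →* (V ≃+ V))
    (hsemi : ∀ (g : G) (a : E) (v : V), ρ g (a • v) = (g • a) • ρ g v)
    (hcontV : ∀ v : V, IsOpen {g : G | ρ g v = v}) :
    ∃ G' : Subgroup G, G'.Normal ∧ IsOpen (G' : Set G) ∧
      ∃ F' : Subfield E, (∀ a : E, a ∈ F' ↔ ∀ g ∈ G', g • a = a) ∧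
        ∃ W : Submodule F' V,
          (∀ g : G, ∀ w ∈ W, ρ g w ∈ W) ∧
          (∀ g ∈ G', ∀ w ∈ W, ρ g w = w) ∧
          Submodule.span E (W : Set V) = ⊤ ∧
          Module.finrank F' W = Module.finrank E V := by
  classical
  set n := Module.finrank E V with hn
  let b : Module.Basis (Fin n) E V := Module.finBasis E V
  -- the stabilizer of the basis
  have hmul : ∀ (g h : G) (v : V), ρ (g * h) v = ρ g (ρ h v) := by
    intro g h v; rw [map_mul]; rfl
  have hone : ∀ v : V, ρ 1 v = v := by
    intro v; rw [map_one]; rfl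
  let H : Subgroup G :=
  { carrier := {g | ∀ i, ρ g (b i) = b i}
    one_mem' := fun i => hone _
    mul_mem' := by
      intro g h hg hh i
      rw [hmul, hh i, hg i]
    inv_mem' := by
      intro g hg i
      have : ρ g⁻¹ (ρ g (b i)) = b i := by rw [← hmul, inv_mul_cancel, hone]
      rwa [hg i] at this }
  have hHopen : IsOpen (H : Set G) := by
    have : (H : Set G) = ⋂ i, {g : G | ρ g (b i) = b i} := by
      ext g; simp [H, Set.mem_iInter]
    rw [this]
    exact isOpen_iInter_of_finite fun i => hcontV (b i)
  obtain ⟨N, hN⟩ := IsTopologicalGroup.exist_openNormalSubgroup_sub_clopen_nhds_of_one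
    ⟨H.isClosed_of_isOpen hHopen, hHopen⟩ H.one_mem
  refine ⟨N.toSubgroup, N.isNormal', N.isOpen', ?_⟩
  set G' := N.toSubgroup with hG'
  let F' : Subfield E :=
  { carrier := {a : E | ∀ g ∈ G', g • a = a}
    mul_mem' := fun ha hb g hg => by rw [smul_mul', ha g hg, hb g hg]
    one_mem' := fun g hg => smul_one g
    add_mem' := fun ha hb g hg => by rw [smul_add, ha g hg, hb g hg]
    zero_mem' := fun g hg => smul_zero g
    neg_mem' := fun ha g hg => by rw [smul_neg, ha g hg]
    inv_mem' := fun a ha g hg => by rw [smul_inv'', ha g hg] }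
  refine ⟨F', fun a => Iff.rfl, ?_⟩
  let W : Submodule F' V :=
  { carrier := {v : V | ∀ g ∈ G', ρ g v = v}
    add_mem' := by intro u v hu hv g hg; rw [map_add, hu g hg, hv g hg]
    zero_mem' := by intro g hg; rw [map_zero]
    smul_mem' := by
      intro c v hv g hg
      have hc : g • (c : E) = (c : E) := c.2 g hg
      show ρ g ((c : E) • v) = (c : E) • v
      rw [hsemi, hc, hv g hg] }
  have hbW : ∀ i, b i ∈ W := fun i g hg => hN hg i
  refine ⟨W, ?_, fun g hg w hw => hw g hg, ?_, ?_⟩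
  · -- G-stability
    intro g w hw g' hg'
    rw [← hmul]
    have h1 : g' * g = g * (g⁻¹ * g' * g) := by group
    have h2 : g⁻¹ * g' * g ∈ G' := N.isNormal'.conj_mem' g' hg' g
    rw [h1, hmul, hw _ h2]
  · -- spanning
    rw [eq_top_iff, ← b.span_eq]
    exact Submodule.span_mono (Set.range_subset_iff.2 hbW)
  · -- dimension
    have hrepr : ∀ (v : V), v ∈ W → ∀ i, b.repr v i ∈ F' := by
      intro v hv i g hg
      have hv' : v = ∑ j, (g • b.repr v j) • b j := by
        conv_lhs => rw [← hv g hg, ← b.sum_repr v]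
        rw [map_sum]
        exact Finset.sum_congr rfl fun j _ => by rw [hsemi, hbW j g hg]
      calc g • b.repr v i
          = b.repr (∑ j, (g • b.repr v j) • b j) i := by rw [b.repr_sum_self]
        _ = b.repr v i := by rw [← hv']
    let w : Fin n → W := fun i => ⟨b i, hbW i⟩
    have hind : LinearIndependent F' w := by
      have hindV : LinearIndependent F' (fun i => b i : Fin n → V) := by
        refine b.linearIndependent.restrict_scalars ?_
        intro x y hxy
        have h2 : (x : E) • (1 : E) = (y : E) • (1 : E) := hxy
        exact Subtype.ext (by simpa using h2)
      exact hindV.of_comp W.subtype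
    have hspan : ⊤ ≤ Submodule.span F' (Set.range w) := by
      rintro ⟨v, hv⟩ -
      have : (⟨v, hv⟩ : W) = ∑ i, (⟨b.repr v i, hrepr v hv i⟩ : F') • w i := by
        apply Subtype.ext
        show v = ((∑ i, (⟨b.repr v i, hrepr v hv i⟩ : F') • w i : W) : V)
        rw [Submodule.coe_sum]
        conv_lhs => rw [← b.sum_repr v]
        exact Finset.sum_congr rfl fun i _ => rfl
      rw [this]
      exact Submodule.sum_mem _ fun i _ =>
        Submodule.smul_mem _ _ (Submodule.subset_span ⟨i, rfl⟩)
    let B : Module.Basis (Fin n) F' W := Module.Basis.mk hind hspan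
    rw [Module.finrank_eq_card_basis B, Fintype.card_fin]
end
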